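/- Let ε₁, ε₂ be the standard basis of ℤ² and set q₁₁ := χ(ε₁,ε₁), q₁₂ := χ(ε₁,ε₂), q₂₁ := χ(ε₂,ε₁). Define λ : ℕ≥1 → k by λ(1) := χ(ε₂,ε₁)⁻¹ − χ(ε₁,ε₂) and λ(m+1) := λ(m) + χ(ε₂+m·ε₁, ε₁)⁻¹ − χ(ε₁, ε₂+m·ε₁). Then for every m ≥ 1: λ(m) = q₂₁⁻¹ · [m]_{q₁₁⁻¹} · (1 − q₁₁^{m−1}·q₁₂·q₂₁). (This is the closed formula for λ(a) at the node a on the right spine of the Stern–Brocot tree with lgfl(a) = m, i.e. with degree ε₂ + m·ε₁, left godfather of degree ε₂ + (m−1)·ε₁ and right godfather the right ghost of degree ε₁.) -/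

import Mathlib

open scoped BigOperators

/-- The q-number `[n]_q := 1 + q + ⋯ + q^{n−1}`. -/
def qNum {k : Type*} [Semiring k] (q : k) (n : ℕ) : k :=
  ∑ i ∈ Finset.range n, q ^ i

/-- Let `χ : ℤ² × ℤ² → kˣ` be a bicharacter, `ε₁ = (1,0)`, `ε₂ = (0,1)`,
`q₁₁ := χ(ε₁,ε₁)`, `q₁₂ := χ(ε₁,ε₂)`, `q₂₁ := χ(ε₂,ε₁)`. If `λ : ℕ≥1 → k`
satisfies `λ(1) = χ(ε₂,ε₁)⁻¹ − χ(ε₁,ε₂)` and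
`λ(m+1) = λ(m) + χ(ε₂+m·ε₁, ε₁)⁻¹ − χ(ε₁, ε₂+m·ε₁)` for all `m ≥ 1`, then for
every `m ≥ 1`: `λ(m) = q₂₁⁻¹ · [m]_{q₁₁⁻¹} · (1 − q₁₁^{m−1}·q₁₂·q₂₁)`. -/
theorem lambda_right_spine_closed_formula
    (k : Type*) [Field k]
    (χ : ℤ × ℤ → ℤ × ℤ → kˣ)
    (hχ₁ : ∀ x y z : ℤ × ℤ, χ (x + y) z = χ x z * χ y z)
    (hχ₂ : ∀ x y z : ℤ × ℤ, χ x (y + z) = χ x y * χ x z)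
    (lam : ℕ → k)
    (hlam₁ : lam 1 = (χ (0, 1) (1, 0) : k)⁻¹ - (χ (1, 0) (0, 1) : k))
    (hlam : ∀ m : ℕ, 1 ≤ m → lam (m + 1) = lam m +
      (χ (((0, 1) : ℤ × ℤ) + m • ((1, 0) : ℤ × ℤ)) (1, 0) : k)⁻¹ -
      (χ (1, 0) (((0, 1) : ℤ × ℤ) + m • ((1, 0) : ℤ × ℤ)) : k)) :
    ∀ m : ℕ, 1 ≤ m → lam m =
      (χ (0, 1) (1, 0) : k)⁻¹ * qNum ((χ (1, 0) (1, 0) : k)⁻¹) m *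
        (1 - (χ (1, 0) (1, 0) : k) ^ (m - 1) *
          (χ (1, 0) (0, 1) : k) * (χ (0, 1) (1, 0) : k)) := by
  -- χ 0 z = 1 and χ x 0 = 1
  have h0l : ∀ z : ℤ × ℤ, χ 0 z = 1 := by
    intro z
    have h := hχ₁ 0 0 z
    simp only [add_zero] at h
    exact left_eq_mul.mp h
  have h0r : ∀ x : ℤ × ℤ, χ x 0 = 1 := by
    intro x
    have h := hχ₂ x 0 0
    simp only [add_zero] at h
    exact left_eq_mul.mp h
  have hsmull : ∀ (n : ℕ) (y z : ℤ × ℤ), χ (n • y) z = (χ y z) ^ n := by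
    intro n y z
    induction n with
    | zero => simpa using h0l z
    | succ i ih => rw [succ_nsmul, hχ₁, ih, pow_succ]
  have hsmulr : ∀ (n : ℕ) (x y : ℤ × ℤ), χ x (n • y) = (χ x y) ^ n := by
    intro n x y
    induction n with
    | zero => simpa using h0r x
    | succ i ih => rw [succ_nsmul, hχ₂, ih, pow_succ]
  set a : k := (χ (1, 0) (1, 0) : k) with ha
  set b : k := (χ (1, 0) (0, 1) : k) with hb
  set c : k := (χ (0, 1) (1, 0) : k) with hc
  have ha0 : a ≠ 0 := Units.ne_zero _
  have hc0 : c ≠ 0 := Units.ne_zero _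
  have hA : ∀ n : ℕ,
      (χ (((0, 1) : ℤ × ℤ) + n • ((1, 0) : ℤ × ℤ)) (1, 0) : k) = c * a ^ n := by
    intro n
    rw [hχ₁, hsmull]
    push_cast
    rfl
  have hB : ∀ n : ℕ,
      (χ (1, 0) (((0, 1) : ℤ × ℤ) + n • ((1, 0) : ℤ × ℤ)) : k) = b * a ^ n := by
    intro n
    rw [hχ₂, hsmulr]
    push_cast
    rfl
  intro m hm
  induction m, hm using Nat.le_induction with
  | base =>
    rw [hlam₁]
    simp only [qNum, Finset.sum_range_one, pow_zero]
    field_simp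
    ring
  | succ n hn ih =>
    obtain ⟨p, rfl⟩ : ∃ p, n = p + 1 := ⟨n - 1, by omega⟩
    rw [hlam _ hn, ih, hA, hB]
    have hg := geom_sum_mul (a⁻¹) (p + 1)
    have hq : qNum a⁻¹ (p + 1 + 1) = qNum a⁻¹ (p + 1) + a⁻¹ ^ (p + 1) := by
      simp [qNum, Finset.sum_range_succ]
    rw [hq]
    simp only [Nat.add_sub_cancel]
    set S : k := qNum a⁻¹ (p + 1) with hS
    have hg' : S * (a⁻¹ - 1) = a⁻¹ ^ (p + 1) - 1 := hg
    linear_combination (S * b * (a ^ (p + 1) - a ^ p) + a⁻¹ ^ (p + 1) * a ^ (p + 1) * b) * inv_mul_cancel₀ hc0 + (-(b * a ^ (p + 1))) * hg' + (S * b * a ^ p) * inv_mul_cancel₀ ha0
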